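/- arXiv:1004.3603 — 3 statements merged into one kernel-verified Lean document; each statement's English description precedes it below -/
import Mathlib

section
/- Let F be a field of characteristic different from 2 and let M be a 2×2 matrix over F. Then M ∈ Ξ_2(F) if and only if M is not symmetric (M ≠ Mᵀ). -/
open Matrix Polynomial

variable {F : Type*} [Field F]

/-- `M ∈ Ξ_n(F)`: every invertible `S` with `SᵀMS = M` has `det S = 1`. -/
def XiMem {n : ℕ} (M : Matrix (Fin n) (Fin n) F) : Prop :=
  ∀ S : Matrix (Fin n) (Fin n) F, IsUnit S → Sᵀ * M * S = M → S.det = 1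

/-- Congruence of square matrices: `SᵀAS = B` for some invertible `S`. -/
def MatCongruent {n : ℕ} (A B : Matrix (Fin n) (Fin n) F) : Prop :=
  ∃ S : Matrix (Fin n) (Fin n) F, IsUnit S ∧ Sᵀ * A * S = B

/-- Similarity of square matrices: `S⁻¹AS = B` for some invertible `S`. -/
def MatSimilar {n : ℕ} (A B : Matrix (Fin n) (Fin n) F) : Prop :=
  ∃ S : Matrix (Fin n) (Fin n) F, IsUnit S ∧ S⁻¹ * A * S = B

/-- Block-diagonal direct sum `A ⊕ B`. -/
def dSum {a b : ℕ} (A : Matrix (Fin a) (Fin a) F) (B : Matrix (Fin b) (Fin b) F) :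
    Matrix (Fin (a + b)) (Fin (a + b)) F :=
  Matrix.reindex finSumFinEquiv finSumFinEquiv (Matrix.fromBlocks A 0 0 B)

/-- Skew sum `[A ╲ B] = [[0, B], [A, 0]]` of two `m × m` matrices. -/
def skewSum {m : ℕ} (A B : Matrix (Fin m) (Fin m) F) :
    Matrix (Fin (m + m)) (Fin (m + m)) F :=
  Matrix.reindex finSumFinEquiv finSumFinEquiv (Matrix.fromBlocks 0 B A 0)

/-- `A` is a direct summand of `M` for congruence. -/
def CongSummand {n r : ℕ} (M : Matrix (Fin n) (Fin n) F)
    (A : Matrix (Fin r) (Fin r) F) : Prop :=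
  ∃ (s : ℕ) (h : r + s = n) (B : Matrix (Fin s) (Fin s) F),
    MatCongruent M (Matrix.reindex (finCongr h) (finCongr h) (dSum A B))

/-- `A` is a direct summand of `M` for similarity. -/
def SimSummand {n r : ℕ} (M : Matrix (Fin n) (Fin n) F)
    (A : Matrix (Fin r) (Fin r) F) : Prop :=
  ∃ (s : ℕ) (h : r + s = n) (B : Matrix (Fin s) (Fin s) F),
    MatSimilar M (Matrix.reindex (finCongr h) (finCongr h) (dSum A B))

/-- `(A, B)` is a direct summand of the pair `(M, N)` for equivalence:
`(M, N)` is equivalent to `(A, B) ⊕ (C, D)` for some pair `(C, D)`. -/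
def PairSummand {n a b : ℕ} (M N : Matrix (Fin n) (Fin n) F)
    (A B : Matrix (Fin a) (Fin b) F) : Prop :=
  ∃ (c d : ℕ) (hc : a + c = n) (hd : b + d = n)
    (C D : Matrix (Fin c) (Fin d) F)
    (R S : Matrix (Fin n) (Fin n) F), IsUnit R ∧ IsUnit S ∧
      R * M * S = Matrix.reindex (finSumFinEquiv.trans (finCongr hc))
          (finSumFinEquiv.trans (finCongr hd)) (Matrix.fromBlocks A 0 0 C) ∧
      R * N * S = Matrix.reindex (finSumFinEquiv.trans (finCongr hc))
          (finSumFinEquiv.trans (finCongr hd)) (Matrix.fromBlocks B 0 0 D)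

/-- The `r × r` Jordan block `J_r(λ)`: `λ` on the diagonal, `1` on the subdiagonal. -/
def jordanBlock (r : ℕ) (lam : F) : Matrix (Fin r) (Fin r) F :=
  Matrix.of fun i j =>
    if (i : ℕ) = (j : ℕ) then lam else if (i : ℕ) = (j : ℕ) + 1 then 1 else 0

/-- The matrix `Γ_r`: with 1-based indices, entry `(i, j)` is `(-1)^(r - i)` if
`i + j = r + 1` or `i + j = r + 2`, and `0` otherwise. -/
def Gam (r : ℕ) : Matrix (Fin r) (Fin r) F :=
  Matrix.of fun i j =>
    if (i : ℕ) + (j : ℕ) = r - 1 ∨ (i : ℕ) + (j : ℕ) = r then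
      (-1 : F) ^ (r - 1 - (i : ℕ)) else 0

/-- Companion matrix of a monic polynomial `x^m + c₁x^(m-1) + ⋯ + c_m`:
`1`'s on the subdiagonal, last column `(-c_m, …, -c₂, -c₁)ᵀ`. -/
def companion (q : Polynomial F) : Matrix (Fin q.natDegree) (Fin q.natDegree) F :=
  Matrix.of fun i j =>
    if (j : ℕ) = q.natDegree - 1 then -q.coeff (i : ℕ)
    else if (i : ℕ) = (j : ℕ) + 1 then 1 else 0

/-- A Frobenius block: the companion matrix of `p^l` with `p` monic irreducible, `l ≥ 1`. -/
def IsFrobeniusBlock {m : ℕ} (A : Matrix (Fin m) (Fin m) F) : Prop :=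
  ∃ (p : Polynomial F) (l : ℕ), p.Monic ∧ Irreducible p ∧ 1 ≤ l ∧
    ∃ h : (p ^ l).natDegree = m,
      A = Matrix.reindex (finCongr h) (finCongr h) (companion (p ^ l))

/-- `Φ` is a cosquare: `Φ = A⁻ᵀA` for some invertible `A`. -/
def IsCosquare {m : ℕ} (A : Matrix (Fin m) (Fin m) F) : Prop :=
  ∃ Q : Matrix (Fin m) (Fin m) F, IsUnit Q ∧ Q⁻¹ᵀ * Q = A

/-- The `(t-1) × t` matrix `F_t` with `F_t(i, j) = 1` iff `j = i`. -/
def Fmat (t : ℕ) : Matrix (Fin (t - 1)) (Fin t) F :=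
  Matrix.of fun i j => if (j : ℕ) = (i : ℕ) then 1 else 0

/-- The `(t-1) × t` matrix `G_t` with `G_t(i, j) = 1` iff `j = i + 1`. -/
def Gmat (t : ℕ) : Matrix (Fin (t - 1)) (Fin t) F :=
  Matrix.of fun i j => if (j : ℕ) = (i : ℕ) + 1 then 1 else 0

/-- a `2 × 2` matrix `M` is in `Ξ_2(F)` iff `M` is not symmetric. -/
theorem stmt_2 {F : Type*} [Field F] (hchar : (2 : F) ≠ 0)
    (M : Matrix (Fin 2) (Fin 2) F) :
    XiMem M ↔ M ≠ Mᵀ := by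
  constructor
  · intro hXi hMsym
    -- M symmetric: construct S with SᵀMS = M, det S = -1
    have h10 : M 1 0 = M 0 1 := by rw [show M 1 0 = Mᵀ 0 1 from rfl, ← hMsym]
    have hm1 : (-1 : F) ≠ 1 := by
      intro h
      apply hchar
      have : (1 : F) + 1 = 0 := by linear_combination -h
      linear_combination this
    have key : ∀ S : Matrix (Fin 2) (Fin 2) F, S.det = -1 → Sᵀ * M * S = M → False := by
      intro S hdet hS
      have hu : IsUnit S := by
        rw [Matrix.isUnit_iff_isUnit_det, isUnit_iff_ne_zero, hdet]
        exact neg_ne_zero.mpr one_ne_zero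
      exact hm1 (hdet ▸ hXi S hu hS)
    by_cases ha : M 0 0 ≠ 0
    · apply key !![1, 2 * M 0 1 / M 0 0; 0, -1]
      · simp [Matrix.det_fin_two]
      · ext i j
        fin_cases i <;> fin_cases j <;>
          simp [Matrix.mul_apply, Fin.sum_univ_two, Matrix.transpose_apply, Matrix.vecHead, Matrix.vecTail, h10] <;> field_simp <;> ring
    · push_neg at ha
      by_cases hd : M 1 1 ≠ 0
      · apply key !![-1, 0; 2 * M 0 1 / M 1 1, 1]
        · simp [Matrix.det_fin_two]
        · ext i j
          fin_cases i <;> fin_cases j <;>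
            simp [Matrix.mul_apply, Fin.sum_univ_two, Matrix.transpose_apply, Matrix.vecHead, Matrix.vecTail, h10, ha] <;> field_simp <;> ring
      · push_neg at hd
        apply key !![0, 1; 1, 0]
        · simp [Matrix.det_fin_two]
        · ext i j
          fin_cases i <;> fin_cases j <;>
            simp [Matrix.mul_apply, Fin.sum_univ_two, Matrix.transpose_apply, Matrix.vecHead, Matrix.vecTail, h10, ha, hd]
  · intro hne S hS h
    have hbc : M 0 1 - M 1 0 ≠ 0 := by
      intro hbc
      apply hne
      have hbc' : M 0 1 = M 1 0 := by linear_combination hbc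
      ext i j
      fin_cases i <;> fin_cases j <;> simp [Matrix.transpose_apply, hbc']
    have e01 := congrFun (congrFun h 0) 1
    have e10 := congrFun (congrFun h 1) 0
    simp only [Matrix.mul_apply, Fin.sum_univ_two, Matrix.transpose_apply] at e01 e10
    have : S.det * (M 0 1 - M 1 0) = M 0 1 - M 1 0 := by
      rw [Matrix.det_fin_two]
      linear_combination e01 - e10
    exact mul_right_cancel₀ hbc (this.trans (one_mul _).symm)
end

section
/- Let F be a field of characteristic different from 2 and let r ≥ 1. The matrix Γ_r is invertible, and Γ_r^{-T}Γ_r is similar to the Jordan block J_r((−1)^{r+1}). -/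
open Matrix Polynomial

variable {F : Type*} [Field F]

namespace Stmt10Aux

variable {F : Type*} [Field F]

def Ginv (r : ℕ) : Matrix (Fin r) (Fin r) F :=
  Matrix.of fun i j => if (i : ℕ) + (j : ℕ) ≤ r - 1 then (-1 : F) ^ (i : ℕ) else 0

def Nmat (r : ℕ) : Matrix (Fin r) (Fin r) F :=
  Matrix.of fun i j => if (i : ℕ) < (j : ℕ) then 1 else 0

lemma sum_two {r : ℕ} (g : Fin r → F) (j1 j2 : Fin r) (c1 c2 : F)
    (hg : ∀ j, g j = (if j = j1 then c1 else 0) + (if j = j2 then c2 else 0)) :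
    ∑ j, g j = c1 + c2 := by
  simp [hg, Finset.sum_add_distrib]

lemma sum_one {r : ℕ} (g : Fin r → F) (j1 : Fin r) (c1 : F)
    (hg : ∀ j, g j = if j = j1 then c1 else 0) :
    ∑ j, g j = c1 := by
  simp [hg]

lemma neg_pow_mul (a b : ℕ) (h : (a + b) % 2 = 0) : (-1 : F) ^ a * (-1 : F) ^ b = 1 := by
  rw [← pow_add]; exact Even.neg_one_pow (Nat.even_iff.mpr h)

lemma neg_pow_mul' (a b : ℕ) (h : (a + b) % 2 = 1) : (-1 : F) ^ a * (-1 : F) ^ b = -1 := by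
  rw [← pow_add]; exact Odd.neg_one_pow (Nat.odd_iff.mpr h)

lemma sum_gam_left (m : ℕ) (i : Fin (m + 1)) (f : Fin (m + 1) → F) :
    ∑ j, (Gam (m + 1) : Matrix (Fin (m+1)) (Fin (m+1)) F) i j * f j
      = (-1 : F) ^ (m - (i : ℕ)) * f ⟨m - (i : ℕ), by omega⟩ +
        (if h : 1 ≤ (i : ℕ) then
          (-1 : F) ^ (m - (i : ℕ)) * f ⟨m + 1 - (i : ℕ), by omega⟩ else 0) := by
  have hi := i.isLt
  have key : ∀ j : Fin (m + 1),
      (Gam (m + 1) : Matrix (Fin (m+1)) (Fin (m+1)) F) i j * f j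
        = (if j = ⟨m - (i : ℕ), by omega⟩ then (-1 : F) ^ (m - (i : ℕ)) * f ⟨m - (i : ℕ), by omega⟩ else 0)
          + (if h2 : 1 ≤ (i : ℕ) then
              (if j = ⟨m + 1 - (i : ℕ), by omega⟩ then
                (-1 : F) ^ (m - (i : ℕ)) * f ⟨m + 1 - (i : ℕ), by omega⟩ else 0) else 0) := by
    intro j
    have hj := j.isLt
    simp only [Gam, Matrix.of_apply]
    by_cases h1 : (j : ℕ) = m - (i : ℕ)
    · have hj1 : j = (⟨m - (i : ℕ), by omega⟩ : Fin (m + 1)) := Fin.ext h1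
      rw [hj1, if_pos (by omega), if_pos rfl]
      have : m + 1 - 1 - (i : ℕ) = m - (i : ℕ) := by omega
      rw [this]
      by_cases h2 : 1 ≤ (i : ℕ)
      · rw [dif_pos h2, if_neg (by simp only [Fin.mk.injEq]; omega), add_zero]
      · rw [dif_neg h2, add_zero]
    · by_cases h2 : 1 ≤ (i : ℕ) ∧ (j : ℕ) = m + 1 - (i : ℕ)
      · have hj2 : j = (⟨m + 1 - (i : ℕ), by omega⟩ : Fin (m + 1)) := Fin.ext h2.2
        rw [hj2, if_pos (by omega), if_neg (by simp only [Fin.mk.injEq]; omega),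
          dif_pos h2.1, if_pos rfl, zero_add]
        have : m + 1 - 1 - (i : ℕ) = m - (i : ℕ) := by omega
        rw [this]
      · rw [if_neg (by omega), zero_mul, if_neg (by simp only [Fin.ext_iff]; omega)]
        by_cases h3 : 1 ≤ (i : ℕ)
        · rw [dif_pos h3, if_neg (by simp only [Fin.ext_iff]; omega), add_zero]
        · rw [dif_neg h3, add_zero]
  by_cases h2 : 1 ≤ (i : ℕ)
  · simp only [dif_pos h2] at key ⊢
    exact sum_two _ _ _ _ _ key
  · simp only [dif_neg h2] at key ⊢
    rw [add_zero]
    refine sum_one _ _ _ (fun j => by rw [key j, add_zero])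

lemma sum_gam_right (m : ℕ) (k : Fin (m + 1)) (f : Fin (m + 1) → F) :
    ∑ j, f j * (Gam (m + 1) : Matrix (Fin (m+1)) (Fin (m+1)) F) j k
      = f ⟨m - (k : ℕ), by omega⟩ * (-1 : F) ^ (k : ℕ) +
        (if h : 1 ≤ (k : ℕ) then
          f ⟨m + 1 - (k : ℕ), by omega⟩ * (-1 : F) ^ ((k : ℕ) - 1) else 0) := by
  have hk := k.isLt
  have key : ∀ j : Fin (m + 1),
      f j * (Gam (m + 1) : Matrix (Fin (m+1)) (Fin (m+1)) F) j k
        = (if j = ⟨m - (k : ℕ), by omega⟩ then f ⟨m - (k : ℕ), by omega⟩ * (-1 : F) ^ (k : ℕ) else 0)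
          + (if h2 : 1 ≤ (k : ℕ) then
              (if j = ⟨m + 1 - (k : ℕ), by omega⟩ then
                f ⟨m + 1 - (k : ℕ), by omega⟩ * (-1 : F) ^ ((k : ℕ) - 1) else 0) else 0) := by
    intro j
    have hj := j.isLt
    simp only [Gam, Matrix.of_apply]
    by_cases h1 : (j : ℕ) = m - (k : ℕ)
    · have hj1 : j = (⟨m - (k : ℕ), by omega⟩ : Fin (m + 1)) := Fin.ext h1
      rw [hj1, if_pos (by simp only []; omega), if_pos rfl]
      have : m + 1 - 1 - (m - (k : ℕ)) = (k : ℕ) := by omega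
      rw [this]
      by_cases h2 : 1 ≤ (k : ℕ)
      · rw [dif_pos h2, if_neg (by simp only [Fin.mk.injEq]; omega), add_zero]
      · rw [dif_neg h2, add_zero]
    · by_cases h2 : 1 ≤ (k : ℕ) ∧ (j : ℕ) = m + 1 - (k : ℕ)
      · have hj2 : j = (⟨m + 1 - (k : ℕ), by omega⟩ : Fin (m + 1)) := Fin.ext h2.2
        rw [hj2, if_pos (by omega), if_neg (by simp only [Fin.mk.injEq]; omega),
          dif_pos h2.1, if_pos rfl, zero_add]
        have : m + 1 - 1 - (m + 1 - (k : ℕ)) = (k : ℕ) - 1 := by omega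
        rw [this]
      · rw [if_neg (by omega), mul_zero, if_neg (by simp only [Fin.ext_iff]; omega)]
        by_cases h3 : 1 ≤ (k : ℕ)
        · rw [dif_pos h3, if_neg (by simp only [Fin.ext_iff]; omega), add_zero]
        · rw [dif_neg h3, add_zero]
  by_cases h2 : 1 ≤ (k : ℕ)
  · simp only [dif_pos h2] at key ⊢
    exact sum_two _ _ _ _ _ key
  · simp only [dif_neg h2] at key ⊢
    rw [add_zero]
    refine sum_one _ _ _ (fun j => by rw [key j, add_zero])

lemma neg_pow_mul_eq (a b c : ℕ) (h : a + b = c) :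
    (-1 : F) ^ a * (-1 : F) ^ b = (-1 : F) ^ c := by rw [← pow_add, h]

lemma gam_mul_ginv (m : ℕ) :
    (Gam (m+1) : Matrix (Fin (m+1)) (Fin (m+1)) F) * Ginv (m+1) = 1 := by
  ext i k
  have hi := i.isLt; have hk := k.isLt
  rw [Matrix.mul_apply, sum_gam_left]
  simp only [Ginv, Matrix.of_apply, Matrix.one_apply, Fin.ext_iff]
  have e1 : (-1 : F) ^ (m - (i : ℕ)) * (-1 : F) ^ (m - (i : ℕ)) = 1 :=
    neg_pow_mul _ _ (by omega)
  by_cases h2 : 1 ≤ (i : ℕ)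
  · have e2 : (-1 : F) ^ (m - (i : ℕ)) * (-1 : F) ^ (m + 1 - (i : ℕ)) = -1 :=
      neg_pow_mul' _ _ (by omega)
    rw [dif_pos h2]
    split_ifs <;>
      first
        | (exfalso; omega)
        | (simp only [mul_zero, add_zero, zero_add, mul_ite, e1, e2]; try norm_num) <;>
          (try omega)
  · rw [dif_neg h2, add_zero]
    split_ifs <;>
      first
        | (exfalso; omega)
        | (simp only [mul_zero, add_zero, zero_add, mul_ite, e1]; try norm_num) <;>
          (try omega)

lemma ginvT_mul_gam (m : ℕ) :
    ((Ginv (m+1) : Matrix (Fin (m+1)) (Fin (m+1)) F)ᵀ * Gam (m+1))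
      = ((-1 : F) ^ m) • (1 : Matrix (Fin (m+1)) (Fin (m+1)) F)
        + (2 * (-1 : F) ^ m) • Nmat (m+1) := by
  ext i k
  have hi := i.isLt; have hk := k.isLt
  rw [Matrix.mul_apply]
  simp only [Matrix.transpose_apply]
  rw [sum_gam_right]
  simp only [Ginv, Nmat, Matrix.of_apply, Matrix.add_apply, Matrix.smul_apply,
    Matrix.one_apply, smul_eq_mul, Fin.ext_iff]
  have e1 : (-1 : F) ^ (m - (k : ℕ)) * (-1 : F) ^ (k : ℕ) = (-1 : F) ^ m :=
    neg_pow_mul_eq _ _ _ (by omega)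
  by_cases h2 : 1 ≤ (k : ℕ)
  · have e2 : (-1 : F) ^ (m + 1 - (k : ℕ)) * (-1 : F) ^ ((k : ℕ) - 1) = (-1 : F) ^ m :=
      neg_pow_mul_eq _ _ _ (by omega)
    rw [dif_pos h2]
    split_ifs <;>
      first
        | (exfalso; omega)
        | (simp only [e1, e2, mul_zero, zero_mul, add_zero, zero_add, mul_one]; try ring)
  · rw [dif_neg h2, add_zero]
    split_ifs <;>
      first
        | (exfalso; omega)
        | (simp only [e1, mul_zero, zero_mul, add_zero, zero_add, mul_one]; try ring)

end Stmt10Aux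

namespace Stmt10Aux
variable {F : Type*} [Field F]

lemma nmat_pow_zero (r : ℕ) : ∀ (k : ℕ) (i j : Fin r), (j : ℕ) < (i : ℕ) + k →
    ((Nmat r : Matrix (Fin r) (Fin r) F) ^ k) i j = 0 := by
  intro k
  induction k with
  | zero =>
    intro i j h
    rw [pow_zero]
    exact Matrix.one_apply_ne (fun e => by subst e; omega)
  | succ k ih =>
    intro i j h
    rw [pow_succ', Matrix.mul_apply]
    apply Finset.sum_eq_zero
    intro t _
    by_cases ht : (i : ℕ) < (t : ℕ)
    · rw [ih t j (by omega), mul_zero]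
    · have h0 : (Nmat r : Matrix (Fin r) (Fin r) F) i t = 0 := by
        simp only [Nmat, Matrix.of_apply, if_neg ht]
      rw [h0, zero_mul]

lemma nmat_pow_one (r : ℕ) : ∀ (k : ℕ) (i j : Fin r), (j : ℕ) = (i : ℕ) + k →
    ((Nmat r : Matrix (Fin r) (Fin r) F) ^ k) i j = 1 := by
  intro k
  induction k with
  | zero =>
    intro i j h
    have : i = j := Fin.ext (by omega)
    subst this
    rw [pow_zero, Matrix.one_apply_eq]
  | succ k ih =>
    intro i j h
    have hj := j.isLt
    have hi1 : (i : ℕ) + 1 < r := by omega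
    rw [pow_succ', Matrix.mul_apply]
    apply sum_one _ (⟨(i : ℕ) + 1, hi1⟩ : Fin r) 1
    intro t
    by_cases ht : t = (⟨(i : ℕ) + 1, hi1⟩ : Fin r)
    · rw [ht, if_pos rfl]
      have h1 : (Nmat r : Matrix (Fin r) (Fin r) F) i ⟨(i : ℕ) + 1, hi1⟩ = 1 := by
        simp only [Nmat, Matrix.of_apply]
        rw [if_pos (by simp)]
      rw [h1, one_mul]
      exact ih _ _ (by simp; omega)
    · rw [if_neg ht]
      have htv : (t : ℕ) ≠ (i : ℕ) + 1 := fun e => ht (Fin.ext e)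
      by_cases hlt : (i : ℕ) < (t : ℕ)
      · rw [nmat_pow_zero r k t j (by omega), mul_zero]
      · have h0 : (Nmat r : Matrix (Fin r) (Fin r) F) i t = 0 := by
          simp only [Nmat, Matrix.of_apply, if_neg hlt]
        rw [h0, zero_mul]

lemma nmat_pow_top (m : ℕ) : ((Nmat (m+1) : Matrix (Fin (m+1)) (Fin (m+1)) F)) ^ (m+1) = 0 := by
  ext i j
  rw [Matrix.zero_apply]
  exact nmat_pow_zero _ _ i j (by omega)

/-- the Krylov similarity matrix -/
def Smat (m : ℕ) (c : F) : Matrix (Fin (m+1)) (Fin (m+1)) F :=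
  Matrix.of fun i k => ((c • Nmat (m+1)) ^ (k : ℕ)) i (Fin.last m)

lemma smat_entry_zero (m : ℕ) (c : F) (i k : Fin (m+1)) (h : (m : ℕ) < (i : ℕ) + (k : ℕ)) :
    Smat m c i k = 0 := by
  simp only [Smat, Matrix.of_apply, _root_.smul_pow, Matrix.smul_apply, smul_eq_mul]
  rw [nmat_pow_zero _ _ i (Fin.last m) (by simp [Fin.val_last]; omega), mul_zero]

lemma smat_entry_diag (m : ℕ) (c : F) (i k : Fin (m+1)) (h : (i : ℕ) + (k : ℕ) = m) :
    Smat m c i k = c ^ (k : ℕ) := by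
  simp only [Smat, Matrix.of_apply, _root_.smul_pow, Matrix.smul_apply, smul_eq_mul]
  rw [nmat_pow_one _ _ i (Fin.last m) (by simp [Fin.val_last]; omega), mul_one]

lemma smat_isUnit (m : ℕ) (c : F) (hc : c ≠ 0) : IsUnit (Smat m c) := by
  rw [Matrix.isUnit_iff_isUnit_det, isUnit_iff_ne_zero]
  have hperm := Matrix.det_permute (Fin.revPerm) (Smat m c)
  have htri : ((Smat m c).submatrix Fin.revPerm id).BlockTriangular OrderDual.toDual := by
    intro i j hij
    have hij' : (i : Fin (m+1)) < j := hij
    have hrev : ((Fin.rev i : Fin (m+1)) : ℕ) = m - (i : ℕ) := by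
      rw [Fin.val_rev]; omega
    simp only [Matrix.submatrix_apply, id_eq]
    apply smat_entry_zero
    have hi := i.isLt
    show (m : ℕ) < ((Fin.rev i : Fin (m+1)) : ℕ) + (j : ℕ)
    rw [hrev]
    have : (i : ℕ) < (j : ℕ) := hij'
    omega
  have hdet : ((Smat m c).submatrix Fin.revPerm id).det = ∏ i : Fin (m+1), c ^ (i : ℕ) := by
    rw [Matrix.det_of_lowerTriangular _ htri]
    apply Finset.prod_congr rfl
    intro i _
    simp only [Matrix.submatrix_apply, id_eq]
    apply smat_entry_diag
    simp only [Fin.revPerm_apply, Fin.val_rev]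
    have hi := i.isLt
    omega
  intro h0
  rw [h0, mul_zero] at hperm
  rw [hperm] at hdet
  have : (∏ i : Fin (m+1), c ^ (i : ℕ)) ≠ 0 :=
    Finset.prod_ne_zero_iff.mpr (fun i _ => pow_ne_zero _ hc)
  exact this hdet.symm

lemma xs_eq_sj (m : ℕ) (lam c : F) :
    (lam • (1 : Matrix (Fin (m+1)) (Fin (m+1)) F) + c • Nmat (m+1)) * Smat m c
      = Smat m c * jordanBlock (m+1) lam := by
  have colrel : ∀ (i k : Fin (m+1)),
      ((c • Nmat (m+1) : Matrix (Fin (m+1)) (Fin (m+1)) F) * Smat m c) i k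
        = ((c • Nmat (m+1)) ^ ((k : ℕ) + 1)) i (Fin.last m) := by
    intro i k
    rw [Matrix.mul_apply, pow_succ', Matrix.mul_apply]
    rfl
  ext i k
  have hk := k.isLt
  rw [Matrix.add_mul, Matrix.smul_mul, Matrix.one_mul, Matrix.add_apply, Matrix.smul_apply,
    colrel, smul_eq_mul, Matrix.mul_apply]
  by_cases hk1 : (k : ℕ) + 1 < m + 1
  · rw [sum_two _ k ⟨(k : ℕ) + 1, hk1⟩ (Smat m c i k * lam) (Smat m c i ⟨(k : ℕ) + 1, hk1⟩) ?hg]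
    · have : Smat m c i ⟨(k : ℕ) + 1, hk1⟩ = ((c • Nmat (m+1)) ^ ((k : ℕ) + 1)) i (Fin.last m) := rfl
      rw [this]; ring
    case hg =>
      intro j
      simp only [jordanBlock, Matrix.of_apply]
      by_cases h1 : j = k
      · subst h1
        rw [if_pos rfl, if_pos rfl, if_neg (by simp only [Fin.mk.injEq, Fin.ext_iff]; omega),
          add_zero]
      · by_cases h2 : j = (⟨(k : ℕ) + 1, hk1⟩ : Fin (m+1))
        · subst h2
          rw [if_neg (by simp), if_pos (by simp), if_neg h1,
            if_pos rfl, zero_add, mul_one]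
        · have hv1 : (j : ℕ) ≠ (k : ℕ) := fun e => h1 (Fin.ext e)
          have hv2 : (j : ℕ) ≠ (k : ℕ) + 1 := fun e => h2 (Fin.ext e)
          rw [if_neg hv1, if_neg hv2, mul_zero, if_neg h1, if_neg h2, add_zero]
  · have hkm : (k : ℕ) = m := by omega
    rw [sum_one _ k (Smat m c i k * lam) ?hg]
    · rw [hkm, _root_.smul_pow, nmat_pow_top, smul_zero, Matrix.zero_apply]
      ring
    case hg =>
      intro j
      simp only [jordanBlock, Matrix.of_apply]
      by_cases h1 : j = k
      · subst h1
        rw [if_pos rfl, if_pos rfl]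
      · have hv1 : (j : ℕ) ≠ (k : ℕ) := fun e => h1 (Fin.ext e)
        have hv2 : (j : ℕ) ≠ (k : ℕ) + 1 := by have := j.isLt; omega
        rw [if_neg hv1, if_neg hv2, mul_zero, if_neg h1]

end Stmt10Aux

namespace Stmt10Aux
variable {F : Type*} [Field F]

lemma mat_similar (m : ℕ) (lam c : F) (hc : c ≠ 0) :
    MatSimilar (lam • (1 : Matrix (Fin (m+1)) (Fin (m+1)) F) + c • Nmat (m+1))
      (jordanBlock (m+1) lam) := by
  refine ⟨Smat m c, smat_isUnit m c hc, ?_⟩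
  rw [mul_assoc, xs_eq_sj m lam c, ← mul_assoc,
    Matrix.nonsing_inv_mul _ ((Matrix.isUnit_iff_isUnit_det _).mp (smat_isUnit m c hc)),
    Matrix.one_mul]

end Stmt10Aux

/-- `Γ_r` is invertible and `Γ_r⁻ᵀΓ_r` is similar to `J_r((-1)^(r+1))`. -/
theorem stmt_10 {F : Type*} [Field F] (hchar : (2 : F) ≠ 0) (r : ℕ) (hr : 1 ≤ r) :
    IsUnit (Gam r : Matrix (Fin r) (Fin r) F) ∧
      MatSimilar ((Gam r : Matrix (Fin r) (Fin r) F)⁻¹ᵀ * Gam r)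
        (jordanBlock r ((-1 : F) ^ (r + 1))) := by
  obtain ⟨m, rfl⟩ : ∃ m, r = m + 1 := ⟨r - 1, by omega⟩
  have hGB := Stmt10Aux.gam_mul_ginv (F := F) m
  constructor
  · letI := invertibleOfRightInverse _ _ hGB
    exact isUnit_of_invertible _
  · have hinv : (Gam (m+1) : Matrix (Fin (m+1)) (Fin (m+1)) F)⁻¹ = Stmt10Aux.Ginv (m+1) :=
      Matrix.inv_eq_right_inv hGB
    rw [hinv, Stmt10Aux.ginvT_mul_gam]
    have hexp : ((-1 : F)) ^ (m + 1 + 1) = (-1 : F) ^ m := by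
      rw [pow_succ, pow_succ]; ring
    rw [hexp]
    exact Stmt10Aux.mat_similar m _ _
      (mul_ne_zero hchar (pow_ne_zero _ (by norm_num)))
end

section
/- Let F be a field of characteristic different from 2, let p(x) be a monic irreducible polynomial over F, let l ≥ 1, and let Φ be the m×m companion matrix of p(x)^l. If Φ is a cosquare and m is odd, then p(x) = x − 1. -/
open Matrix Polynomial

variable {F : Type*} [Field F]

lemma companion_pow_mulVec {q : Polynomial F} (hm : 0 < q.natDegree) :
    ∀ j (hj : j < q.natDegree),
      (companion q) ^ j *ᵥ Pi.single (⟨0, hm⟩ : Fin q.natDegree) (1 : F)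
        = Pi.single ⟨j, hj⟩ 1 := by
  intro j
  induction j with
  | zero =>
    intro hj
    simp only [pow_zero, Matrix.one_mulVec]
  | succ j ih =>
    intro hj
    have hj' : j < q.natDegree := Nat.lt_of_succ_lt hj
    rw [pow_succ', ← Matrix.mulVec_mulVec, ih hj']
    funext i
    simp only [Matrix.mulVec_single, Pi.smul_apply, Matrix.col_apply, op_smul_eq_mul, companion, Matrix.of_apply]
    have hne : j ≠ q.natDegree - 1 := by omega
    simp only [Fin.val_mk, if_neg hne, Pi.single_apply]
    by_cases h : (i : ℕ) = j + 1
    · rw [if_pos h, if_pos (by ext; simp [h]), mul_one]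
    · rw [if_neg h, if_neg (by intro hc; apply h; rw [hc]), zero_mul]

lemma companion_last {q : Polynomial F} (hm : 0 < q.natDegree) :
    (companion q) ^ q.natDegree *ᵥ Pi.single (⟨0, hm⟩ : Fin q.natDegree) (1 : F)
      = (fun i : Fin q.natDegree => -q.coeff (i : ℕ)) := by
  have h1 : (companion q) ^ q.natDegree = companion q * (companion q) ^ (q.natDegree - 1) := by
    rw [← pow_succ']; congr 1; omega
  rw [h1, ← Matrix.mulVec_mulVec,
    companion_pow_mulVec hm (q.natDegree - 1) (by omega)]
  funext i
  simp [companion, mulVec_single]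

lemma companion_aeval_e0 {q : Polynomial F} (hq : q.Monic) (hm : 0 < q.natDegree) :
    (Polynomial.aeval (companion q) q) *ᵥ Pi.single (⟨0, hm⟩ : Fin q.natDegree) (1 : F) = 0 := by
  set e0 : Fin q.natDegree → F := Pi.single (⟨0, hm⟩ : Fin q.natDegree) 1 with he0
  rw [Polynomial.aeval_eq_sum_range (p := q) (companion q)]
  have hms := map_sum (Matrix.mulVec.addMonoidHomLeft e0)
    (fun i => q.coeff i • companion q ^ i) (Finset.range (q.natDegree + 1))
  simp only [Matrix.mulVec.addMonoidHomLeft, AddMonoidHom.coe_mk, ZeroHom.coe_mk] at hms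
  rw [hms]
  have hterm : ∀ i, (q.coeff i • (companion q) ^ i) *ᵥ e0
      = q.coeff i • ((companion q) ^ i *ᵥ e0) := fun i => Matrix.smul_mulVec _ _ _
  simp only [hterm]
  rw [Finset.sum_range_succ, companion_last hm, hq.coeff_natDegree, one_smul]
  have hsum : ∑ i ∈ Finset.range q.natDegree, q.coeff i • ((companion q) ^ i *ᵥ e0)
      = fun k : Fin q.natDegree => q.coeff (k : ℕ) := by
    rw [← Fin.sum_univ_eq_sum_range (fun i => q.coeff i • ((companion q) ^ i *ᵥ e0))]
    funext k
    rw [Finset.sum_apply]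
    have hj : ∀ j : Fin q.natDegree,
        (q.coeff (j : ℕ) • ((companion q) ^ (j : ℕ) *ᵥ e0)) k
        = if k = j then q.coeff (j : ℕ) else 0 := by
      intro j
      rw [he0, companion_pow_mulVec hm (j : ℕ) j.isLt]
      have hjj : (⟨(j : ℕ), j.isLt⟩ : Fin q.natDegree) = j := rfl
      rw [hjj, Pi.smul_apply, Pi.single_apply]
      by_cases h : k = j <;> simp [h]
    simp only [hj]
    simp
  rw [hsum]
  funext k
  simp

lemma companion_aeval_self {q : Polynomial F} (hq : q.Monic) (hm : 0 < q.natDegree) :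
    Polynomial.aeval (companion q) q = 0 := by
  set C := companion q with hC
  set N := Polynomial.aeval C q with hN
  have hcomm : ∀ j : ℕ, N * C ^ j = C ^ j * N := by
    intro j
    have h1 : C ^ j = Polynomial.aeval C ((X : Polynomial F) ^ j) := by
      rw [map_pow, aeval_X]
    rw [hN, h1, ← _root_.map_mul, ← _root_.map_mul, mul_comm q ((X : Polynomial F) ^ j)]
  ext i j
  have h2 : N i j = (N *ᵥ Pi.single j 1) i := by simp
  rw [h2]
  have h3 : Pi.single j (1:F) = C ^ (j : ℕ) *ᵥ Pi.single (⟨0, hm⟩ : Fin q.natDegree) 1 := by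
    rw [companion_pow_mulVec hm (j : ℕ) j.isLt]
  rw [h3, Matrix.mulVec_mulVec, hcomm, ← Matrix.mulVec_mulVec,
    companion_aeval_e0 hq hm, Matrix.mulVec_zero]
  simp

/-- if the companion matrix of `p^l` (`p` monic irreducible, `l ≥ 1`) is a
cosquare of odd size, then `p = x - 1`. -/
theorem stmt_12 {F : Type*} [Field F] (hchar : (2 : F) ≠ 0) (p : Polynomial F)
    (hp : p.Monic) (hirr : Irreducible p) (l : ℕ) (hl : 1 ≤ l)
    (hcos : IsCosquare (companion (p ^ l))) (hodd : Odd ((p ^ l).natDegree)) :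
    p = Polynomial.X - 1 := by
  have hd : 0 < p.natDegree := by
    by_contra h
    push_neg at h
    have h0 : p.natDegree = 0 := by omega
    exact hirr.not_isUnit (hp.natDegree_eq_zero.mp h0 ▸ isUnit_one)
  have hm : 0 < (p ^ l).natDegree := by
    rw [Polynomial.natDegree_pow]
    exact Nat.mul_pos hl hd
  obtain ⟨Q, hQ, hΦ⟩ := hcos
  have hQd : IsUnit Q.det := (Matrix.isUnit_iff_isUnit_det Q).mp hQ
  have hQQ : Q * Q⁻¹ = 1 := Matrix.mul_nonsing_inv Q hQd
  have hskew : (Qᵀ - Q).det = 0 := by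
    have h1 : (Qᵀ - Q)ᵀ = -(Qᵀ - Q) := by
      rw [Matrix.transpose_sub, Matrix.transpose_transpose, neg_sub]
    have h2 : (Qᵀ - Q).det = -(Qᵀ - Q).det := by
      conv_lhs => rw [← Matrix.det_transpose, h1]
      rw [Matrix.det_neg, Fintype.card_fin, hodd.neg_one_pow, neg_one_mul]
    have h3 : (2 : F) * (Qᵀ - Q).det = 0 := by linear_combination h2
    exact (mul_eq_zero.mp h3).resolve_left hchar
  have hfact : (Q⁻¹)ᵀ * (Qᵀ - Q) = 1 - companion (p ^ l) := by
    rw [Matrix.mul_sub, hΦ, ← Matrix.transpose_mul, hQQ, Matrix.transpose_one]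
  have hdet0 : (1 - companion (p ^ l)).det = 0 := by
    rw [← hfact, Matrix.det_mul, hskew, mul_zero]
  obtain ⟨v, hv0, hv⟩ := (Matrix.exists_mulVec_eq_zero_iff).mpr hdet0
  have hΦv : companion (p ^ l) *ᵥ v = v := by
    rw [Matrix.sub_mulVec, Matrix.one_mulVec, sub_eq_zero] at hv
    exact hv.symm
  have hpow : ∀ k : ℕ, (companion (p ^ l)) ^ k *ᵥ v = v := by
    intro k
    induction k with
    | zero => simp
    | succ k ih => rw [pow_succ', ← Matrix.mulVec_mulVec, ih, hΦv]
  have hqm : (p ^ l).Monic := hp.pow l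
  have hann := companion_aeval_self hqm hm
  have heval : (p ^ l).eval 1 = 0 := by
    have h4 : (Polynomial.aeval (companion (p ^ l)) (p ^ l)) *ᵥ v
        = ((p ^ l).eval 1) • v := by
      rw [Polynomial.aeval_eq_sum_range]
      have hms := map_sum (Matrix.mulVec.addMonoidHomLeft v)
        (fun i => (p ^ l).coeff i • companion (p ^ l) ^ i)
        (Finset.range ((p ^ l).natDegree + 1))
      simp only [Matrix.mulVec.addMonoidHomLeft, AddMonoidHom.coe_mk, ZeroHom.coe_mk] at hms
      rw [hms]
      simp only [Matrix.smul_mulVec, hpow]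
      rw [← Finset.sum_smul]
      congr 1
      rw [Polynomial.eval_eq_sum_range]
      simp
    rw [hann, Matrix.zero_mulVec] at h4
    exact (smul_eq_zero.mp h4.symm).resolve_right hv0
  have heval1 : p.eval 1 = 0 := by
    rw [Polynomial.eval_pow] at heval
    exact (pow_eq_zero_iff (by omega)).mp heval
  have hdvd : (X - Polynomial.C (1 : F)) ∣ p := Polynomial.dvd_iff_isRoot.mpr heval1
  have hassoc := (Polynomial.irreducible_X_sub_C (1 : F)).associated_of_dvd hirr hdvd
  have hfin := Polynomial.eq_of_monic_of_associated (Polynomial.monic_X_sub_C 1) hp hassoc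
  rw [← hfin, Polynomial.C_1]
end
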